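/- Let A ∈ 𝔅(n) be a Bott matrix, k ∈ {1,…,n}, and B = Φ_k(A). Let a_1,…,a_n and b_1,…,b_n be the involutions of T^n associated with A and B respectively, and let f̃_k : T^n → T^n be the map (z_1,…,z_n) ↦ (z_1,…,z_{k−1}, √−1·z_k, z_{k+1},…,z_n). Then for every i ∈ {1,…,n} and every z ∈ T^n, f̃_k(b_i(z)) = (a_i ∘ a_k^{A^i_k})(f̃_k(z)), where a_k^0 is the identity and a_k^1 = a_k. -/

import Mathlib

open Matrix

/-- A Bott matrix: conjugate by a permutation matrix to a strictly upper
triangular binary matrix. -/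
def IsBott {n : ℕ} (A : Matrix (Fin n) (Fin n) (ZMod 2)) : Prop :=
  ∃ (σ : Equiv.Perm (Fin n)) (B : Matrix (Fin n) (Fin n) (ZMod 2)),
    (∀ i j : Fin n, j ≤ i → B i j = 0) ∧
    A = σ.permMatrix (ZMod 2) * B * (σ⁻¹).permMatrix (ZMod 2)

/-- (Op2) `Φ_k(A)_j = A_j + A^k_j A_k`. -/
def Phi2 {n : ℕ} (k : Fin n) (A : Matrix (Fin n) (Fin n) (ZMod 2)) :
    Matrix (Fin n) (Fin n) (ZMod 2) :=
  fun i j => A i j + A k j * A i k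

/-- `z(a)`: `z` if `a = 0` and the complex conjugate `z̄` if `a = 1`. -/
noncomputable def conjPow (a : ZMod 2) (z : ℂ) : ℂ :=
  if a = 0 then z else (starRingEnd ℂ) z

/-- The involution `a_i` of `T^n ⊆ ℂ^n` associated with a binary matrix `A`. -/
noncomputable def aMap {n : ℕ} (A : Matrix (Fin n) (Fin n) (ZMod 2)) (i : Fin n)
    (z : Fin n → ℂ) : Fin n → ℂ :=
  fun j => if j = i then -z i else conjPow (A i j) (z j)

/-- The affine automorphism `f̃_k` of `T^n`:
`(z_1,…,z_n) ↦ (z_1,…,z_{k−1}, √-1·z_k, z_{k+1},…,z_n)`. -/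
noncomputable def ftildeK {n : ℕ} (k : Fin n) (z : Fin n → ℂ) : Fin n → ℂ :=
  fun j => if j = k then Complex.I * z k else z j

lemma isBott_entry {n : ℕ} {A : Matrix (Fin n) (Fin n) (ZMod 2)}
    (hA : IsBott A) {i j : Fin n} (h : A i j ≠ 0) : A j i = 0 := by
  obtain ⟨σ, B, hB, rfl⟩ := hA
  have key : ∀ a b : Fin n,
      (σ.permMatrix (ZMod 2) * B * (σ⁻¹).permMatrix (ZMod 2)) a b = B (σ a) (σ b) := by
    intro a b
    rw [Equiv.Perm.permMatrix, Equiv.Perm.permMatrix, PEquiv.toMatrix_toPEquiv_mul,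
      PEquiv.mul_toMatrix_toPEquiv]
    simp [Equiv.Perm.inv_def]
  rw [key] at h ⊢
  apply hB
  by_contra hle
  exact h (hB _ _ (le_of_not_ge hle))

lemma conjPow_add (a b : ZMod 2) (z : ℂ) :
    conjPow (a + b) z = conjPow a (conjPow b z) := by
  rcases (by decide : ∀ x : ZMod 2, x = 0 ∨ x = 1) a with rfl | rfl <;>
    rcases (by decide : ∀ x : ZMod 2, x = 0 ∨ x = 1) b with rfl | rfl <;> simp [conjPow, show (1:ZMod 2)+1 = 0 by decide]

/-- Equivariance of `f̃_k` for the operation (Op2): with `B = Φ_k(A)` and the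
involutions `b_i` of `B`, one has `f̃_k(b_i(z)) = (a_i ∘ a_k^{A^i_k})(f̃_k(z))`
for all `i` and all `z ∈ T^n`. -/
theorem ftildeK_equivariant {n : ℕ} (A : Matrix (Fin n) (Fin n) (ZMod 2))
    (hA : IsBott A) (k : Fin n) :
    ∀ (i : Fin n) (z : Fin n → ℂ), (∀ j, ‖z j‖ = 1) →
      ftildeK k (aMap (Phi2 k A) i z) =
        if A i k = 0 then aMap A i (ftildeK k z)
        else aMap A i (aMap A k (ftildeK k z)) := by
  intro i z _
  by_cases hik : A i k = 0
  · simp only [hik, if_pos]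
    funext j
    by_cases hjk : j = k
    · subst hjk
      by_cases hji : j = i
      · subst hji
        simp [ftildeK, aMap]
      · simp [ftildeK, aMap, hji, Phi2, hik, mul_comm]
        by_cases h0 : A i j = 0 <;> simp [conjPow, h0, _root_.map_mul]
    · by_cases hji : j = i
      · subst hji
        have : j ≠ k := hjk
        simp [ftildeK, aMap, hjk, this]
      · simp [ftildeK, aMap, hjk, hji, Phi2, hik]
  · have hone : ∀ x : ZMod 2, x ≠ 0 → x = 1 := by decide
    have hik1 : A i k = 1 := hone _ hik
    have hdiag : ∀ m, A m m = 0 := fun m => by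
      by_contra h; exact h (isBott_entry hA h)
    have hki : A k i = 0 := isBott_entry hA hik
    have hink : i ≠ k := by
      rintro rfl
      exact hik hki
    simp only [hik, if_neg, if_false]
    funext j
    by_cases hjk : j = k
    · subst hjk
      simp [ftildeK, aMap, Phi2, conjPow, hik1, hki, hdiag, Ne.symm hink]
    · by_cases hji : j = i
      · subst hji
        simp only [ftildeK, aMap, if_pos rfl, if_neg hjk, hki]
        simp [conjPow, hjk]
      · simp only [ftildeK, aMap, Phi2, if_neg hjk, if_neg hji, hik1, mul_one]
        rw [conjPow_add]
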